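/- Let h : [0,σ) → [0,∞) be continuous, increasing, with ∫₀^σ h(t)dt = +∞. Define H(s) = ∫₀ˢ h(t)dt, ψ(s) = ∫₀ˢ e^{−H(t)}dt, L = ψ(σ) (finite), and g(s) = e^{−H(ψ⁻¹(s))} for s ∈ [0,L). Then g(0) = 1, g is decreasing, g'(s) = −h(ψ⁻¹(s)) for s ∈ (0,L), and lim_{s→L⁻} g(s) = 0. -/

import Mathlib

open Filter Topology

theorem stmt6 (σ : ℝ) (hσ : 0 < σ) (h : ℝ → ℝ)
    (hcont : ContinuousOn h (Set.Ico 0 σ)) (hmono : MonotoneOn h (Set.Ico 0 σ))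
    (hnonneg : ∀ t ∈ Set.Ico 0 σ, 0 ≤ h t)
    (hblow : Tendsto h (𝓝[<] σ) atTop)
    (H : ℝ → ℝ) (hH : ∀ s, H s = ∫ t in (0:ℝ)..s, h t)
    (hHinf : Tendsto H (𝓝[<] σ) atTop)
    (ψ : ℝ → ℝ) (hψ : ∀ s, ψ s = ∫ t in (0:ℝ)..s, Real.exp (-H t))
    (L : ℝ) (hL : L = ψ σ)
    (ψinv : ℝ → ℝ)
    (hinv : ∀ s ∈ Set.Ico 0 L, ψinv s ∈ Set.Ico 0 σ ∧ ψ (ψinv s) = s)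
    (g : ℝ → ℝ) (hg : ∀ s, g s = Real.exp (-H (ψinv s))) :
    g 0 = 1 ∧ AntitoneOn g (Set.Ico 0 L) ∧
      (∀ s ∈ Set.Ioo 0 L, HasDerivAt g (-(h (ψinv s))) s) ∧
      Tendsto g (𝓝[<] L) (𝓝 0) := by
  -- integrability of h on subintervals of [0,σ)
  have hInt : ∀ t ∈ Set.Ico (0:ℝ) σ, IntervalIntegrable h MeasureTheory.volume 0 t := by
    intro t ht
    apply ContinuousOn.intervalIntegrable
    apply hcont.mono
    rw [Set.uIcc_of_le ht.1]
    exact fun x hx => ⟨hx.1, lt_of_le_of_lt hx.2 ht.2⟩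
  have hInt' : ∀ a b, a ∈ Set.Ico (0:ℝ) σ → b ∈ Set.Ico (0:ℝ) σ → a ≤ b →
      IntervalIntegrable h MeasureTheory.volume a b := by
    intro a b ha hb hab
    apply ContinuousOn.intervalIntegrable
    apply hcont.mono
    rw [Set.uIcc_of_le hab]
    exact fun x hx => ⟨le_trans ha.1 hx.1, lt_of_le_of_lt hx.2 hb.2⟩
  have hH0 : H 0 = 0 := by rw [hH]; simp
  have hHdiff : ∀ a b, a ∈ Set.Ico (0:ℝ) σ → b ∈ Set.Ico (0:ℝ) σ → a ≤ b →
      H b - H a = ∫ t in a..b, h t := by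
    intro a b ha hb hab
    rw [hH, hH]
    rw [← intervalIntegral.integral_add_adjacent_intervals (hInt a ha) (hInt' a b ha hb hab)]
    ring
  have hHmono : ∀ a b, a ∈ Set.Ico (0:ℝ) σ → b ∈ Set.Ico (0:ℝ) σ → a ≤ b → H a ≤ H b := by
    intro a b ha hb hab
    have h1 : 0 ≤ ∫ t in a..b, h t := by
      apply intervalIntegral.integral_nonneg hab
      intro u hu
      exact hnonneg u ⟨le_trans ha.1 hu.1, lt_of_le_of_lt hu.2 hb.2⟩
    have := hHdiff a b ha hb hab
    linarith
  have hHnonneg : ∀ t ∈ Set.Ico (0:ℝ) σ, 0 ≤ H t := by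
    intro t ht
    have := hHmono 0 t ⟨le_rfl, hσ⟩ ht ht.1
    rw [hH0] at this; exact this
  -- continuity of H on [0,σ)
  have hHcont : ContinuousOn H (Set.Ico 0 σ) := by
    intro t ht
    obtain ⟨b, htb, hbσ⟩ := exists_between ht.2
    have hb : b ∈ Set.Ico (0:ℝ) σ := ⟨le_trans ht.1 htb.le, hbσ⟩
    have h1 : ContinuousOn (fun x => ∫ t in (0:ℝ)..x, h t) (Set.uIcc 0 b) :=
      intervalIntegral.continuousOn_primitive_interval' (hInt b hb) Set.left_mem_uIcc
    rw [Set.uIcc_of_le hb.1] at h1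
    have h2 : ContinuousOn H (Set.Icc 0 b) := by
      apply h1.congr
      intro x _; exact hH x
    have h3 : ContinuousWithinAt H (Set.Icc 0 b) t := h2.continuousWithinAt ⟨ht.1, htb.le⟩
    apply h3.mono_of_mem_nhdsWithin
    apply Filter.mem_of_superset (inter_mem_nhdsWithin _ (Iio_mem_nhds htb))
    exact fun x hx => ⟨hx.1.1, hx.2.le⟩
  have hecont : ContinuousOn (fun t => Real.exp (-H t)) (Set.Ico 0 σ) :=
    Real.continuous_exp.comp_continuousOn hHcont.neg
  -- integrability of exp(-H) on [0,σ]
  have heInt : IntervalIntegrable (fun t => Real.exp (-H t)) MeasureTheory.volume 0 σ := by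
    rw [intervalIntegrable_iff_integrableOn_Icc_of_le hσ.le,
      integrableOn_Icc_iff_integrableOn_Ico]
    constructor
    · exact hecont.aestronglyMeasurable measurableSet_Ico
    · apply MeasureTheory.HasFiniteIntegral.restrict_of_bounded (C := 1)
        (measure_Ico_lt_top)
      rw [MeasureTheory.ae_restrict_iff' measurableSet_Ico]
      filter_upwards with x hx
      rw [Real.norm_eq_abs, abs_of_pos (Real.exp_pos _)]
      exact Real.exp_le_one_iff.2 (neg_nonpos.2 (hHnonneg x hx))
  have heInt' : ∀ a b : ℝ, 0 ≤ a → a ≤ b → b ≤ σ →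
      IntervalIntegrable (fun t => Real.exp (-H t)) MeasureTheory.volume a b := by
    intro a b ha hab hb
    apply heInt.mono_set
    rw [Set.uIcc_of_le hσ.le, Set.uIcc_of_le hab]
    exact Set.Icc_subset_Icc ha hb
  have hψ0 : ψ 0 = 0 := by rw [hψ]; simp
  have hψlt : ∀ a b : ℝ, 0 ≤ a → a < b → b ≤ σ → ψ a < ψ b := by
    intro a b ha hab hb
    have hd : ψ b - ψ a = ∫ t in a..b, Real.exp (-H t) := by
      rw [hψ, hψ, ← intervalIntegral.integral_add_adjacent_intervals
        (heInt' 0 a le_rfl ha (le_trans hab.le hb)) (heInt' a b ha hab.le hb)]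
      ring
    have hpos : 0 < ∫ t in a..b, Real.exp (-H t) :=
      intervalIntegral.intervalIntegral_pos_of_pos (heInt' a b ha hab.le hb)
        (fun x => Real.exp_pos _) hab
    linarith
  have hψle : ∀ a b : ℝ, 0 ≤ a → a ≤ b → b ≤ σ → ψ a ≤ ψ b := by
    intro a b ha hab hb
    rcases eq_or_lt_of_le hab with rfl|h'
    · exact le_rfl
    · exact (hψlt a b ha h' hb).le
  have hLpos : 0 < L := by
    have := hψlt 0 σ le_rfl hσ le_rfl
    rw [hψ0] at this
    rw [hL]; exact this
  have hinvmem : ∀ s ∈ Set.Ico (0:ℝ) L, ψinv s ∈ Set.Ico (0:ℝ) σ := fun s hs => (hinv s hs).1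
  have hψinv : ∀ s ∈ Set.Ico (0:ℝ) L, ψ (ψinv s) = s := fun s hs => (hinv s hs).2
  have hlb : ∀ c ∈ Set.Ico (0:ℝ) σ, ∀ s ∈ Set.Ico (0:ℝ) L, ψ c < s → c < ψinv s := by
    intro c hc s hs hcs
    by_contra hle
    push_neg at hle
    have := hψle (ψinv s) c (hinvmem s hs).1 hle hc.2.le
    rw [hψinv s hs] at this
    linarith
  have hub : ∀ b : ℝ, 0 ≤ b → b ≤ σ → ∀ s ∈ Set.Ico (0:ℝ) L, s < ψ b → ψinv s < b := by
    intro b hb0 hbσ s hs hsb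
    by_contra hle
    push_neg at hle
    have := hψle b (ψinv s) hb0 hle (hinvmem s hs).2.le
    rw [hψinv s hs] at this
    linarith
  have hinv0 : ψinv 0 = 0 := by
    have h0 : (0:ℝ) ∈ Set.Ico (0:ℝ) L := ⟨le_rfl, hLpos⟩
    by_contra hne
    have hx := hinvmem 0 h0
    have h1 : 0 < ψinv 0 := lt_of_le_of_ne hx.1 (Ne.symm hne)
    have h2 := hψlt 0 (ψinv 0) le_rfl h1 hx.2.le
    rw [hψ0, hψinv 0 h0] at h2
    exact lt_irrefl 0 h2
  have hinvmono : ∀ s₁ ∈ Set.Ico (0:ℝ) L, ∀ s₂ ∈ Set.Ico (0:ℝ) L, s₁ ≤ s₂ → ψinv s₁ ≤ ψinv s₂ := by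
    intro s₁ h₁ s₂ h₂ h12
    by_contra hlt
    push_neg at hlt
    have := hψlt (ψinv s₂) (ψinv s₁) (hinvmem s₂ h₂).1 hlt (hinvmem s₁ h₁).2.le
    rw [hψinv s₁ h₁, hψinv s₂ h₂] at this
    linarith
  refine ⟨?_, ?_, ?_, ?_⟩
  · rw [hg, hinv0, hH0]; simp
  · intro s₁ h₁ s₂ h₂ h12
    rw [hg, hg]
    apply Real.exp_le_exp.2
    apply neg_le_neg
    exact hHmono _ _ (hinvmem s₁ h₁) (hinvmem s₂ h₂) (hinvmono s₁ h₁ s₂ h₂ h12)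
  · intro s hs
    have hsmem : s ∈ Set.Ico (0:ℝ) L := ⟨hs.1.le, hs.2⟩
    have hx : ψinv s ∈ Set.Ico (0:ℝ) σ := hinvmem s hsmem
    have hψx : ψ (ψinv s) = s := hψinv s hsmem
    have hx0 : 0 < ψinv s := by
      rcases lt_or_eq_of_le hx.1 with h'|h'
      · exact h'
      · exfalso
        rw [← h', hψ0] at hψx
        linarith [hs.1]
    have hcont_inv : ContinuousAt ψinv s := by
      rw [ContinuousAt]
      apply tendsto_order.2
      constructor
      · intro a ha
        rcases lt_or_ge a 0 with ha0|ha0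
        · filter_upwards [Ioo_mem_nhds hs.1 hs.2] with y hy
          exact lt_of_lt_of_le ha0 (hinvmem y ⟨hy.1.le, hy.2⟩).1
        · have haI : a ∈ Set.Ico (0:ℝ) σ := ⟨ha0, lt_trans ha hx.2⟩
          have hψa0 : 0 ≤ ψ a := by
            have := hψle 0 a le_rfl ha0 haI.2.le
            rwa [hψ0] at this
          have hψas : ψ a < s := by
            rw [← hψx]; exact hψlt a (ψinv s) ha0 ha hx.2.le
          filter_upwards [Ioo_mem_nhds hψas hs.2] with y hy
          exact hlb a haI y ⟨le_trans hψa0 hy.1.le, hy.2⟩ hy.1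
      · intro b hb
        rcases le_or_gt σ b with hbσ|hbσ
        · filter_upwards [Ioo_mem_nhds hs.1 hs.2] with y hy
          exact lt_of_lt_of_le (hinvmem y ⟨hy.1.le, hy.2⟩).2 hbσ
        · have hsb : s < ψ b := by
            rw [← hψx]; exact hψlt (ψinv s) b hx.1 hb hbσ.le
          filter_upwards [Ioo_mem_nhds hs.1 hs.2, Iio_mem_nhds hsb] with y hy1 hy2
          exact hub b (le_trans hx.1 hb.le) hbσ.le y ⟨hy1.1.le, hy1.2⟩ hy2
    have hIcoNhds : Set.Ico (0:ℝ) σ ∈ 𝓝 (ψinv s) :=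
      Filter.mem_of_superset (Ioo_mem_nhds hx0 hx.2) Set.Ioo_subset_Ico_self
    have hmeas1 : StronglyMeasurableAtFilter h (𝓝 (ψinv s)) MeasureTheory.volume :=
      (hcont.mono Set.Ioo_subset_Ico_self).stronglyMeasurableAtFilter isOpen_Ioo _ ⟨hx0, hx.2⟩
    have hHd : HasDerivAt H (h (ψinv s)) (ψinv s) := by
      have hfun : H = fun u => ∫ t in (0:ℝ)..u, h t := funext hH
      rw [hfun]
      exact intervalIntegral.integral_hasDerivAt_right (hInt _ hx) hmeas1
        (hcont.continuousAt hIcoNhds)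
    have hmeas2 : StronglyMeasurableAtFilter (fun t => Real.exp (-H t)) (𝓝 (ψinv s))
        MeasureTheory.volume :=
      (hecont.mono Set.Ioo_subset_Ico_self).stronglyMeasurableAtFilter isOpen_Ioo _ ⟨hx0, hx.2⟩
    have hψd : HasDerivAt ψ (Real.exp (-H (ψinv s))) (ψinv s) := by
      have hfun : ψ = fun u => ∫ t in (0:ℝ)..u, Real.exp (-H t) := funext hψ
      rw [hfun]
      exact intervalIntegral.integral_hasDerivAt_right (heInt' 0 _ le_rfl hx.1 hx.2.le) hmeas2
        (hecont.continuousAt hIcoNhds)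
    have hne : Real.exp (-H (ψinv s)) ≠ 0 := (Real.exp_pos _).ne'
    have hfg : ∀ᶠ y in 𝓝 s, ψ (ψinv y) = y := by
      filter_upwards [Ioo_mem_nhds hs.1 hs.2] with y hy
      exact hψinv y ⟨hy.1.le, hy.2⟩
    have hinvd : HasDerivAt ψinv (Real.exp (-H (ψinv s)))⁻¹ s :=
      HasDerivAt.of_local_left_inverse hcont_inv hψd hne hfg
    have hHc : HasDerivAt (fun y => H (ψinv y)) (h (ψinv s) * (Real.exp (-H (ψinv s)))⁻¹) s :=
      hHd.comp s hinvd
    have hexp : HasDerivAt (fun y => Real.exp (-H (ψinv y)))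
        (Real.exp (-H (ψinv s)) * -(h (ψinv s) * (Real.exp (-H (ψinv s)))⁻¹)) s := hHc.neg.exp
    have hgfun : g = fun y => Real.exp (-H (ψinv y)) := funext hg
    rw [hgfun]
    convert hexp using 1
    field_simp
  · have hmemIoo : Set.Ioo 0 L ∈ 𝓝[<] L := Ioo_mem_nhdsLT_of_mem ⟨hLpos, le_rfl⟩
    have h1 : Tendsto ψinv (𝓝[<] L) (𝓝[<] σ) := by
      rw [tendsto_nhdsWithin_iff]
      constructor
      · apply tendsto_order.2
        constructor
        · intro a ha
          rcases lt_or_ge a 0 with ha0|ha0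
          · filter_upwards [hmemIoo] with y hy
            exact lt_of_lt_of_le ha0 (hinvmem y ⟨hy.1.le, hy.2⟩).1
          · have haI : a ∈ Set.Ico (0:ℝ) σ := ⟨ha0, ha⟩
            have hψa0 : 0 ≤ ψ a := by
              have := hψle 0 a le_rfl ha0 ha.le
              rwa [hψ0] at this
            have hψaL : ψ a < L := by rw [hL]; exact hψlt a σ ha0 ha le_rfl
            filter_upwards [Ioo_mem_nhdsLT_of_mem ⟨hψaL, le_rfl⟩] with y hy
            exact hlb a haI y ⟨le_trans hψa0 hy.1.le, hy.2⟩ hy.1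
        · intro b hb
          filter_upwards [hmemIoo] with y hy
          exact lt_trans (hinvmem y ⟨hy.1.le, hy.2⟩).2 hb
      · filter_upwards [hmemIoo] with y hy
        exact (hinvmem y ⟨hy.1.le, hy.2⟩).2
    have h2 : Tendsto (fun y => -H (ψinv y)) (𝓝[<] L) atBot :=
      tendsto_neg_atTop_atBot.comp (hHinf.comp h1)
    have h3 := Real.tendsto_exp_atBot.comp h2
    exact h3.congr fun y => (hg y).symm
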